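/- Let f : ℝ^M → ℝ be continuously differentiable, let P be a probability measure on ℝ^M such that f is P-integrable and each x⁰ ↦ IG_i(x^t | x⁰) is P-integrable. Then the expected integrated gradient EIG_i(x^t) = ∫ IG_i(x^t | x⁰) dP(x⁰) satisfies the sum rule Σ_{i=1}^M EIG_i(x^t) = f(x^t) − ⟨f⟩, where ⟨f⟩ = ∫ f(x) dP(x). -/

import Mathlib

open MeasureTheory

lemma sum_IG_eq (M : ℕ) (f : (Fin M → ℝ) → ℝ) (hf : ContDiff ℝ 1 f)
    (xt x0 : Fin M → ℝ) :
    ∑ i : Fin M, (xt i - x0 i) *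
        (∫ α in (0:ℝ)..1, fderiv ℝ f (x0 + α • (xt - x0)) (Pi.single i 1))
      = f xt - f x0 := by
  have hfd : Differentiable ℝ f := hf.differentiable one_ne_zero
  have hcont : Continuous (fun y => fderiv ℝ f y) := hf.continuous_fderiv one_ne_zero
  set γ : ℝ → (Fin M → ℝ) := fun α => x0 + α • (xt - x0) with hγdef
  have hγc : Continuous γ := by continuity
  have hγd : ∀ α : ℝ, HasDerivAt γ (xt - x0) α := by
    intro α
    have := ((hasDerivAt_id α).smul_const (xt - x0)).const_add x0
    simpa [hγdef] using this
  -- continuity of integrands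
  have hci : ∀ v : Fin M → ℝ, Continuous fun α => fderiv ℝ f (γ α) v := by
    intro v
    exact (ContinuousLinearMap.apply ℝ ℝ v).continuous.comp (hcont.comp hγc)
  have key : ∀ α : ℝ, ∑ i : Fin M, (xt i - x0 i) * fderiv ℝ f (γ α) (Pi.single i 1)
      = fderiv ℝ f (γ α) (xt - x0) := by
    intro α
    have hv : xt - x0 = ∑ i : Fin M, (xt i - x0 i) • (Pi.single i 1 : Fin M → ℝ) := by
      rw [← Finset.univ_sum_single (xt - x0)]
      refine Finset.sum_congr rfl fun i _ => ?_
      rw [← Pi.single_smul]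
      simp
    rw [hv, map_sum]
    refine Finset.sum_congr rfl fun i _ => ?_
    rw [_root_.map_smul]
    simp [smul_eq_mul]
  calc ∑ i : Fin M, (xt i - x0 i) *
        (∫ α in (0:ℝ)..1, fderiv ℝ f (γ α) (Pi.single i 1))
      = ∑ i : Fin M, ∫ α in (0:ℝ)..1, (xt i - x0 i) * fderiv ℝ f (γ α) (Pi.single i 1) := by
        refine Finset.sum_congr rfl fun i _ => ?_
        rw [intervalIntegral.integral_const_mul]
    _ = ∫ α in (0:ℝ)..1, ∑ i : Fin M, (xt i - x0 i) * fderiv ℝ f (γ α) (Pi.single i 1) := by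
        rw [intervalIntegral.integral_finset_sum]
        intro i _
        exact (continuous_const.mul (hci (Pi.single i 1))).intervalIntegrable 0 1
    _ = ∫ α in (0:ℝ)..1, fderiv ℝ f (γ α) (xt - x0) := by
        refine intervalIntegral.integral_congr fun α _ => key α
    _ = f xt - f x0 := by
        have h := intervalIntegral.integral_eq_sub_of_hasDerivAt
          (f := fun α => f (γ α)) (f' := fun α => fderiv ℝ f (γ α) (xt - x0))
          (a := 0) (b := 1)
          (fun α _ => (hfd (γ α)).hasFDerivAt.comp_hasDerivAt α (hγd α))
          ((hci (xt - x0)).intervalIntegrable 0 1)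
        rw [h]
        simp [hγdef]

/-- Sum rule for the expected integrated gradient: for a continuously differentiable
`f` and a baseline distribution `P`, the EIG attributions sum to `f(xᵗ) − ⟨f⟩`,
where `⟨f⟩ = ∫ f dP`. -/
theorem stmt_5 (M : ℕ) (f : (Fin M → ℝ) → ℝ) (hf : ContDiff ℝ 1 f)
    (P : Measure (Fin M → ℝ)) [IsProbabilityMeasure P] (xt : Fin M → ℝ)
    (hfint : Integrable f P)
    (hIGint : ∀ i : Fin M, Integrable (fun x0 : Fin M → ℝ =>
      (xt i - x0 i) *
        ∫ α in (0:ℝ)..1, fderiv ℝ f (x0 + α • (xt - x0)) (Pi.single i 1)) P) :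
    ∑ i : Fin M, ∫ x0 : Fin M → ℝ,
        (xt i - x0 i) *
          (∫ α in (0:ℝ)..1, fderiv ℝ f (x0 + α • (xt - x0)) (Pi.single i 1)) ∂P
      = f xt - ∫ x : Fin M → ℝ, f x ∂P := by
  rw [← integral_finset_sum _ (fun i _ => hIGint i)]
  have : ∀ x0 : Fin M → ℝ, ∑ i : Fin M, (xt i - x0 i) *
      (∫ α in (0:ℝ)..1, fderiv ℝ f (x0 + α • (xt - x0)) (Pi.single i 1))
      = f xt - f x0 := fun x0 => sum_IG_eq M f hf xt x0
  rw [integral_congr_ae (Filter.Eventually.of_forall this)]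
  rw [integral_sub (integrable_const _) hfint]
  simp
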